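/- arXiv:2308.12781 — 2 statements merged into one kernel-verified Lean document; each statement's English description precedes it below -/
import Mathlib

section
/- Let T be a singular n×n upper triangular pencil over ℂ such that T has normal rank n−1 and T has no eigenvalues (i.e., rank T(μ) = n−1 for all μ ∈ ℂ ∪ {∞}). If the uppermost zero diagonal entry of T is in position (k+1, k+1), then the unique right minimal index of T equals k. -/
open Polynomial Matrix

variable {n : ℕ}

/-- The pencil `A + λ B` as a matrix over the rational function field `ℂ(λ)`. -/
noncomputable def pencilRat (A B : Matrix (Fin n) (Fin n) ℂ) :
    Matrix (Fin n) (Fin n) (RatFunc ℂ) :=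
  Matrix.of fun i j =>
    algebraMap ℂ (RatFunc ℂ) (A i j) + RatFunc.X * algebraMap ℂ (RatFunc ℂ) (B i j)

def UpperTri (M : Matrix (Fin n) (Fin n) ℂ) : Prop :=
  ∀ i j : Fin n, j < i → M i j = 0

/-- The set of degrees of nonzero polynomial vectors in the right null space of the
pencil `A + λ B`; its least element is the right minimal index when the nullity is 1. -/
noncomputable def kernelDegrees (A B : Matrix (Fin n) (Fin n) ℂ) : Set ℕ :=
  {d : ℕ | ∃ v : Fin n → Polynomial ℂ, v ≠ 0 ∧
    (pencilRat A B).mulVec (fun i => algebraMap (Polynomial ℂ) (RatFunc ℂ) (v i)) = 0 ∧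
    d = Finset.univ.sup fun i => (v i).natDegree}

/-! ### Auxiliary definitions -/

def emb1 (k : Fin n) (a : Fin (k : ℕ)) : Fin n := ⟨a, a.2.trans k.2⟩
def emb2 (k : Fin n) (b : Fin ((k : ℕ) + 1)) : Fin n :=
  ⟨b, lt_of_le_of_lt (Nat.lt_succ_iff.mp b.2) k.2⟩

/-- the leading `k × (k+1)` block -/
def blockOf {α : Type*} (k : Fin n) (P : Matrix (Fin n) (Fin n) α) :
    Matrix (Fin (k : ℕ)) (Fin ((k : ℕ) + 1)) α :=
  Matrix.of fun a b => P (emb1 k a) (emb2 k b)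

/-- the pencil as a matrix of polynomials -/
noncomputable def pencilPoly (A B : Matrix (Fin n) (Fin n) ℂ) :
    Matrix (Fin n) (Fin n) ℂ[X] :=
  Matrix.of fun i j => C (A i j) + X * C (B i j)

/-! ### Rank lemmas -/

lemma myrank_add_le {a b : ℕ} (X Y : Matrix (Fin a) (Fin b) ℂ) :
    (X + Y).rank ≤ X.rank + Y.rank := by
  classical
  have hr : LinearMap.range (X + Y).mulVecLin ≤
      LinearMap.range X.mulVecLin ⊔ LinearMap.range Y.mulVecLin := by
    rintro x ⟨v, rfl⟩
    rw [Matrix.mulVecLin_add]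
    exact Submodule.add_mem_sup (LinearMap.mem_range_self _ v) (LinearMap.mem_range_self _ v)
  have h1 : (X + Y).rank ≤ Module.finrank ℂ
      ↥(LinearMap.range X.mulVecLin ⊔ LinearMap.range Y.mulVecLin) :=
    Submodule.finrank_mono hr
  exact h1.trans (Submodule.finrank_add_le_finrank_add_finrank _ _)

lemma exists_dropCol_det_ne_zero {s : ℕ} (W : Matrix (Fin s) (Fin (s + 1)) ℂ)
    (h : s ≤ W.rank) : ∃ j : Fin (s + 1), (W.submatrix id j.succAbove).det ≠ 0 := by
  classical
  have hrk : W.rank = Module.finrank ℂ (Submodule.span ℂ (Set.range Wᵀ)) :=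
    Matrix.rank_eq_finrank_span_cols W
  have htop : Submodule.span ℂ (Set.range Wᵀ) = ⊤ := by
    apply Submodule.eq_of_le_of_finrank_le le_top
    rw [finrank_top, Module.finrank_fintype_fun_eq_card, Fintype.card_fin, ← hrk]
    exact h
  obtain ⟨b, hb_sub, hb_span, hb_ind⟩ := exists_linearIndependent ℂ (Set.range Wᵀ)
  rw [htop] at hb_span
  have hbfin : b.Finite := (Set.finite_range Wᵀ).subset hb_sub
  haveI : Fintype b := hbfin.fintype
  have hbasis : Module.Basis b ℂ (Fin s → ℂ) := Module.Basis.mk hb_ind (by rw [Subtype.range_coe, hb_span])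
  have hcard : Fintype.card b = s := by
    have := Module.finrank_eq_card_basis hbasis
    rw [Module.finrank_fintype_fun_eq_card, Fintype.card_fin] at this
    omega
  let e : Fin s ≃ b := (Fintype.equivFinOfCardEq hcard).symm
  have hchoice : ∀ x : b, ∃ i : Fin (s + 1), Wᵀ i = (x : Fin s → ℂ) := fun x => hb_sub x.2
  choose φ hφ using hchoice
  have hφinj : Function.Injective φ := by
    intro x y hxy
    apply Subtype.ext
    rw [← hφ x, ← hφ y, hxy]
  let g : Fin s → Fin (s + 1) := φ ∘ e
  have hginj : Function.Injective g := hφinj.comp e.injective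
  have hindg : LinearIndependent ℂ (fun c => Wᵀ (g c)) := by
    have : (fun c => Wᵀ (g c)) = (fun x : b => (x : Fin s → ℂ)) ∘ e := by
      funext c; simp [g, hφ]
    rw [this]
    exact hb_ind.comp e e.injective
  have hdetg : ((W.submatrix id g)).det ≠ 0 := by
    have : LinearIndependent ℂ (fun c => (W.submatrix id g)ᵀ c) := by
      convert hindg using 1
      rfl
    have hu := Matrix.linearIndependent_cols_iff_isUnit.mp this
    rw [Matrix.isUnit_iff_isUnit_det] at hu
    exact hu.ne_zero
  have hnsurj : ¬ Function.Surjective g := by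
    intro hs
    have := Fintype.card_le_of_surjective g hs
    simp at this
  simp only [Function.Surjective, not_forall] at hnsurj
  obtain ⟨j, hj⟩ := hnsurj
  push_neg at hj
  refine ⟨j, ?_⟩
  have hσc : ∀ c, ∃ c', j.succAbove c' = g c := fun c => Fin.exists_succAbove_eq (fun h => hj c h)
  choose σ0 hσ0 using hσc
  have hσinj : Function.Injective σ0 := by
    intro x y hxy
    apply hginj
    rw [← hσ0 x, ← hσ0 y, hxy]
  let σ : Equiv.Perm (Fin s) := Equiv.ofBijective σ0 (Finite.injective_iff_bijective.mp hσinj)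
  have hcomp : W.submatrix id g = (W.submatrix id j.succAbove).submatrix id σ := by
    ext i c
    simp [Matrix.submatrix_apply, σ, Equiv.ofBijective, hσ0]
  intro hzero
  rw [hcomp, Matrix.det_permute' σ] at hdetg
  rw [hzero, mul_zero] at hdetg
  exact hdetg rfl

lemma block_rank_ge (k : Fin n) (P : Matrix (Fin n) (Fin n) ℂ)
    (htri : ∀ i j : Fin n, j < i → P i j = 0) (hkk : P k k = 0)
    (hr : P.rank = n - 1) : (k : ℕ) ≤ (blockOf k P).rank := by
  classical
  set W := blockOf k P with hW
  set R : Matrix (Fin n) (Fin (k : ℕ)) ℂ := Matrix.of fun i a => if (i : ℕ) = (a : ℕ) then 1 else 0 with hR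
  set S : Matrix (Fin ((k : ℕ) + 1)) (Fin n) ℂ := Matrix.of fun b j => if (j : ℕ) = (b : ℕ) then 1 else 0 with hS
  set d1 : Fin n → ℂ := fun j => if (j : ℕ) ≤ (k : ℕ) then 1 else 0 with hd1
  set d2 : Fin n → ℂ := fun j => if (j : ℕ) ≤ (k : ℕ) then 0 else 1 with hd2
  have hsplit : P = P * diagonal d1 + P * diagonal d2 := by
    rw [← mul_add, diagonal_add]
    have : (fun i => d1 i + d2 i) = fun _ => (1 : ℂ) := by
      funext j
      simp only [hd1, hd2]
      by_cases h : (j : ℕ) ≤ (k : ℕ)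
      · rw [if_pos h, if_pos h]; norm_num
      · rw [if_neg h, if_neg h]; norm_num
    rw [this, diagonal_one, mul_one]
  have hr2 : (P * diagonal d2).rank ≤ n - ((k : ℕ) + 1) := by
    refine (Matrix.rank_mul_le_right _ _).trans ?_
    rw [Matrix.rank_diagonal]
    have hcongr : Fintype.card {i // d2 i ≠ 0} = Fintype.card {j : Fin n // ¬((j : ℕ) ≤ (k : ℕ))} := by
      apply Fintype.card_congr
      apply Equiv.subtypeEquivRight
      intro j
      simp only [hd2]
      by_cases h : (j : ℕ) ≤ (k : ℕ)
      · rw [if_pos h]; simp [h]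
      · rw [if_neg h]; simp [h]
    rw [hcongr, Fintype.card_subtype_compl]
    have hcard : Fintype.card {j : Fin n // (j : ℕ) ≤ (k : ℕ)} = (k : ℕ) + 1 := by
      have e : {j : Fin n // (j : ℕ) ≤ (k : ℕ)} ≃ Fin ((k : ℕ) + 1) :=
        { toFun := fun j => ⟨(j : Fin n), Nat.lt_succ_iff.mpr j.2⟩
          invFun := fun b => ⟨emb2 k b, Nat.lt_succ_iff.mp b.2⟩
          left_inv := fun j => by ext; simp [emb2]
          right_inv := fun b => by ext; simp [emb2] }
      rw [Fintype.card_congr e, Fintype.card_fin]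
    rw [hcard, Fintype.card_fin]
  have hfact : P * diagonal d1 = R * (W * S) := by
    ext i j
    rw [Matrix.mul_diagonal]
    have hWS : ∀ a : Fin (k : ℕ), (W * S) a j = if hj : (j : ℕ) < (k : ℕ) + 1 then W a ⟨j, hj⟩ else 0 := by
      intro a
      rw [Matrix.mul_apply]
      by_cases hj : (j : ℕ) < (k : ℕ) + 1
      · rw [dif_pos hj, Finset.sum_eq_single (⟨(j : ℕ), hj⟩ : Fin ((k : ℕ) + 1))]
        · simp [hS]
        · intro b _ hb
          have : ¬((j : ℕ) = (b : ℕ)) := fun h => hb (by ext; simp [← h])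
          simp [hS, this]
        · simp
      · rw [dif_neg hj]
        apply Finset.sum_eq_zero
        intro b _
        have : ¬((j : ℕ) = (b : ℕ)) := by
          intro h; exact hj (h ▸ b.2)
        simp [hS, this]
    rw [Matrix.mul_apply]
    by_cases hi : (i : ℕ) < (k : ℕ)
    · rw [Finset.sum_eq_single (⟨(i : ℕ), hi⟩ : Fin (k : ℕ))]
      · rw [hWS]
        by_cases hj : (j : ℕ) < (k : ℕ) + 1
        · rw [dif_pos hj]
          have h1 : d1 j = 1 := by
            simp only [hd1]; rw [if_pos (Nat.lt_succ_iff.mp hj)]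
          have : W ⟨(i : ℕ), hi⟩ ⟨(j : ℕ), hj⟩ = P i j := rfl
          simp [hR, this, h1]
        · rw [dif_neg hj]
          have h1 : d1 j = 0 := by
            simp only [hd1, if_neg (by omega : ¬ (j:ℕ) ≤ (k:ℕ))]
          simp [hR, h1]
      · intro a _ ha
        have : ¬((i : ℕ) = (a : ℕ)) := fun h => ha (by ext; simp [← h])
        simp [hR, this]
      · simp
    · have hz : ∀ a : Fin (k : ℕ), R i a * (W * S) a j = 0 := by
        intro a
        have : ¬((i : ℕ) = (a : ℕ)) := by
          have := a.2; omega
        simp [hR, this]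
      rw [Finset.sum_eq_zero (fun a _ => hz a)]
      by_cases hj : (j : ℕ) ≤ (k : ℕ)
      · have hP : P i j = 0 := by
          rcases Nat.lt_or_ge (j : ℕ) (i : ℕ) with h | h
          · exact htri i j h
          · have hik : (i : ℕ) = (k : ℕ) ∧ (j : ℕ) = (k : ℕ) := by omega
            have : i = k := by ext; exact hik.1
            have h2 : j = k := by ext; exact hik.2
            rw [this, h2]; exact hkk
        simp [hP]
      · have h1 : d1 j = 0 := by
          simp only [hd1]; rw [if_neg hj]
        simp [h1]
  have hle : P.rank ≤ W.rank + (n - ((k : ℕ) + 1)) := by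
    calc P.rank = (P * diagonal d1 + P * diagonal d2).rank := by rw [← hsplit]
      _ ≤ (P * diagonal d1).rank + (P * diagonal d2).rank := myrank_add_le _ _
      _ ≤ W.rank + (n - ((k : ℕ) + 1)) := by
          apply add_le_add _ hr2
          rw [hfact]
          exact (Matrix.rank_mul_le_right _ _).trans (Matrix.rank_mul_le_left _ _)
  rw [hr] at hle
  have hkn := k.2
  omega

/-! ### Polynomial degree lemmas -/

lemma natDegree_det_le {s : ℕ} (M : Matrix (Fin s) (Fin s) ℂ[X])
    (h : ∀ i j, (M i j).natDegree ≤ 1) : M.det.natDegree ≤ s := by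
  rw [Matrix.det_apply']
  apply Polynomial.natDegree_sum_le_of_forall_le
  intro σ _
  refine Polynomial.natDegree_mul_le.trans ?_
  rw [Polynomial.natDegree_intCast, zero_add]
  refine (Polynomial.natDegree_prod_le _ _).trans ?_
  calc ∑ i : Fin s, (M (σ i) i).natDegree ≤ ∑ _i : Fin s, 1 :=
        Finset.sum_le_sum fun i _ => h (σ i) i
    _ = s := by simp

lemma coeff_det_top {s : ℕ} (M : Matrix (Fin s) (Fin s) ℂ[X])
    (h : ∀ i j, (M i j).natDegree ≤ 1) :
    M.det.coeff s = (Matrix.of fun i j => (M i j).coeff 1).det := by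
  rw [Matrix.det_apply', Matrix.det_apply', Polynomial.finset_sum_coeff]
  apply Finset.sum_congr rfl
  intro σ _
  have := Polynomial.coeff_prod_of_natDegree_le (s := (Finset.univ : Finset (Fin s)))
    (fun i => M (σ i) i) 1 (fun i _ => h (σ i) i)
  simpa using this

/-- the descent lemma: dividing out common roots of the denominator -/
lemma descent {s : ℕ} (w mh : Fin (s + 1) → ℂ[X])
    (hroot : ∀ μ : ℂ, ∃ j, (mh j).eval μ ≠ 0) :
    ∀ N : ℕ, ∀ q p : ℂ[X], q ≠ 0 → q.natDegree ≤ N → (∀ j, q * w j = p * mh j) →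
      ∃ p' : ℂ[X], ∀ j, w j = p' * mh j := by
  intro N
  induction N with
  | zero =>
    intro q p hq hdeg heq
    have hqc : q = C (q.coeff 0) := Polynomial.eq_C_of_natDegree_le_zero hdeg
    have hc0 : q.coeff 0 ≠ 0 := fun h => hq (by rw [hqc, h, map_zero])
    refine ⟨C (q.coeff 0)⁻¹ * p, fun j => ?_⟩
    have := heq j
    rw [hqc] at this
    calc w j = C (q.coeff 0)⁻¹ * (C (q.coeff 0) * w j) := by
          rw [← mul_assoc, ← Polynomial.C_mul, inv_mul_cancel₀ hc0, Polynomial.C_1, one_mul]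
      _ = C (q.coeff 0)⁻¹ * p * mh j := by rw [this, mul_assoc]
  | succ N ih =>
    intro q p hq hdeg heq
    by_cases h0 : q.natDegree = 0
    · exact ih q p hq (by omega) heq
    · have hdpos : 0 < q.degree := Polynomial.natDegree_pos_iff_degree_pos.mp (by omega)
      obtain ⟨μ, hμ⟩ := Complex.exists_root hdpos
      obtain ⟨j0, hj0⟩ := hroot μ
      have hpμ : p.IsRoot μ := by
        have h := congrArg (Polynomial.eval μ) (heq j0)
        rw [Polynomial.eval_mul, Polynomial.eval_mul, hμ, zero_mul] at h
        rcases mul_eq_zero.mp h.symm with h' | h'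
        · exact h'
        · exact absurd h' hj0
      obtain ⟨q1, hq1⟩ := (Polynomial.dvd_iff_isRoot).mpr hμ
      obtain ⟨p1, hp1⟩ := (Polynomial.dvd_iff_isRoot).mpr hpμ
      have hXμ : (X - C μ) ≠ (0 : ℂ[X]) := Polynomial.X_sub_C_ne_zero μ
      have hq1ne : q1 ≠ 0 := by
        rintro rfl
        rw [mul_zero] at hq1
        exact hq hq1
      have hdeg1 : q1.natDegree ≤ N := by
        have : q.natDegree = 1 + q1.natDegree := by
          rw [hq1, Polynomial.natDegree_mul hXμ hq1ne, Polynomial.natDegree_X_sub_C]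
        omega
      refine ih q1 p1 hq1ne hdeg1 (fun j => ?_)
      have h := heq j
      rw [hq1, hp1, mul_assoc, mul_assoc] at h
      exact mul_left_cancel₀ hXμ h

/-- For a singular upper triangular pencil of normal rank `n-1` with no eigenvalues,
if the uppermost zero diagonal entry is in position `k+1` (0-based index `k`), then
the right minimal index equals `k`. -/
theorem minimal_index_of_triangular_pencil (A B : Matrix (Fin n) (Fin n) ℂ)
    (hA : UpperTri A) (hB : UpperTri B)
    (hrank : (pencilRat A B).rank = n - 1)
    (heig : ∀ μ : ℂ, (A + μ • B).rank = n - 1) (heiginf : B.rank = n - 1)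
    (k : Fin n) (hzero : A k k = 0 ∧ B k k = 0)
    (huppermost : ∀ i : Fin n, i < k → ¬(A i i = 0 ∧ B i i = 0)) :
    IsLeast (kernelDegrees A B) (k : ℕ) := by
  classical
  obtain ⟨hA0, hB0⟩ := hzero
  set K : ℕ := (k : ℕ) with hK
  set P : Matrix (Fin n) (Fin n) ℂ[X] := pencilPoly A B with hP
  have hPentry : ∀ i j, P i j = C (A i j) + X * C (B i j) := fun i j => rfl
  have hPdeg : ∀ i j, (P i j).natDegree ≤ 1 := by
    intro i j
    rw [hPentry]
    refine (Polynomial.natDegree_add_le _ _).trans ?_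
    refine max_le (by simp) (Polynomial.natDegree_mul_le.trans ?_)
    simp
  set m : Fin (K + 1) → ℂ[X] :=
    fun j => ((blockOf k P).submatrix id j.succAbove).det with hm
  set mh : Fin (K + 1) → ℂ[X] := fun j => C ((-1 : ℂ) ^ (j : ℕ)) * m j with hmh
  set vh : Fin n → ℂ[X] := fun t => if h : (t : ℕ) < K + 1 then mh ⟨t, h⟩ else 0 with hvh
  -- degree bound for the minors
  have hmdeg : ∀ j, (m j).natDegree ≤ K := fun j =>
    natDegree_det_le _ (fun a c => hPdeg _ _)
  have hmhdeg : ∀ j, (mh j).natDegree ≤ K := fun j =>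
    (Polynomial.natDegree_C_mul_le _ _).trans (hmdeg j)
  -- top coefficient of the minors
  have hmcoeff : ∀ j, (m j).coeff K = ((blockOf k B).submatrix id j.succAbove).det := by
    intro j
    have hmat : (Matrix.of fun a c => ((((blockOf k P).submatrix id j.succAbove)) a c).coeff 1)
        = (blockOf k B).submatrix id j.succAbove := by
      ext a c
      show (C (A _ _) + X * C (B _ _)).coeff 1 = B _ _
      simp [mul_comm X (C _), Polynomial.coeff_mul_X]
    have h := coeff_det_top ((blockOf k P).submatrix id j.succAbove) (fun a c => hPdeg _ _)
    rw [hmat] at h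
    exact h
  -- evaluation of the minors
  have hmeval : ∀ (μ : ℂ) j,
      (m j).eval μ = ((blockOf k (A + μ • B)).submatrix id j.succAbove).det := by
    intro μ j
    have h2 : ((blockOf k P).submatrix id j.succAbove).map (Polynomial.evalRingHom μ)
        = (blockOf k (A + μ • B)).submatrix id j.succAbove := by
      ext a c
      show Polynomial.eval μ (C (A _ _) + X * C (B _ _)) = A _ _ + μ * B _ _
      rw [Polynomial.eval_add, Polynomial.eval_C, Polynomial.eval_mul, Polynomial.eval_X,
        Polynomial.eval_C, mul_comm]
    have h3 := RingHom.map_det (Polynomial.evalRingHom μ) ((blockOf k P).submatrix id j.succAbove)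
    rw [RingHom.mapMatrix_apply, h2] at h3
    exact h3
  -- a minor with nonzero top coefficient
  obtain ⟨jstar, hjstar⟩ := exists_dropCol_det_ne_zero (blockOf k B)
    (block_rank_ge k B (fun i j h => hB i j h) hB0 heiginf)
  have hmjs : (m jstar).coeff K ≠ 0 := by rw [hmcoeff]; exact hjstar
  have hmjsne : m jstar ≠ 0 := fun h => hmjs (by rw [h, Polynomial.coeff_zero])
  have hKle : K ≤ (m jstar).natDegree := Polynomial.le_natDegree_of_ne_zero hmjs
  have hmhjs : (mh jstar).coeff K ≠ 0 := by
    rw [hmh]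
    dsimp only
    rw [Polynomial.coeff_C_mul]
    exact mul_ne_zero (pow_ne_zero _ (neg_ne_zero.mpr one_ne_zero)) hmjs
  have hmhjsne : mh jstar ≠ 0 := fun h => hmhjs (by rw [h, Polynomial.coeff_zero])
  have hKleh : K ≤ (mh jstar).natDegree := Polynomial.le_natDegree_of_ne_zero hmhjs
  -- no common roots of the minors
  have hroot : ∀ μ : ℂ, ∃ j, (m j).eval μ ≠ 0 := by
    intro μ
    have htr : ∀ i j : Fin n, j < i → (A + μ • B) i j = 0 := by
      intro i j h
      simp [Matrix.add_apply, hA i j h, hB i j h]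
    have hkk : (A + μ • B) k k = 0 := by simp [Matrix.add_apply, hA0, hB0]
    obtain ⟨j, hj⟩ := exists_dropCol_det_ne_zero (blockOf k (A + μ • B))
      (block_rank_ge k (A + μ • B) htr hkk (heig μ))
    exact ⟨j, by rw [hmeval]; exact hj⟩
  have hrooth : ∀ μ : ℂ, ∃ j, (mh j).eval μ ≠ 0 := by
    intro μ
    obtain ⟨j, hj⟩ := hroot μ
    refine ⟨j, ?_⟩
    rw [hmh]
    dsimp only
    rw [Polynomial.eval_mul, Polynomial.eval_C]
    exact mul_ne_zero (pow_ne_zero _ (neg_ne_zero.mpr one_ne_zero)) hj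
  -- value of vh on the block
  have hvhval : ∀ j : Fin (K + 1), vh (emb2 k j) = mh j := by
    intro j
    have h1 : ((emb2 k j : Fin n) : ℕ) < K + 1 := j.2
    rw [hvh]
    dsimp only
    rw [dif_pos h1]
    congr 1
  -- the Cramer identity : vh is in the kernel of the polynomial pencil
  have hker : P.mulVec vh = 0 := by
    funext i
    rw [Pi.zero_apply]
    show (∑ t, P i t * vh t) = 0
    by_cases hik : (i : ℕ) < K
    · -- Laplace expansion of a matrix with a repeated row
      set Q : Matrix (Fin (K + 1)) (Fin (K + 1)) ℂ[X] :=
        Matrix.of fun r c =>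
          Fin.cases (motive := fun _ => ℂ[X]) (P i (emb2 k c)) (fun a => blockOf k P a c) r
        with hQ
      have hQ0 : ∀ c, Q 0 c = P i (emb2 k c) := fun c => rfl
      have hQs : ∀ (a : Fin K) (c : Fin (K + 1)), Q a.succ c = blockOf k P a c := by
        intro a c
        show Fin.cases (motive := fun _ => ℂ[X]) (P i (emb2 k c)) (fun a => blockOf k P a c) a.succ
          = blockOf k P a c
        rw [Fin.cases_succ]
      have hdup : Q 0 = Q (Fin.succ ⟨(i : ℕ), hik⟩) := by
        funext c
        rw [hQ0, hQs]
        show P i (emb2 k c) = P (emb1 k ⟨(i : ℕ), hik⟩) (emb2 k c)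
        congr 1
      have hdet0 : Q.det = 0 :=
        Matrix.det_zero_of_row_eq (Fin.succ_ne_zero _).symm hdup
      rw [Matrix.det_succ_row_zero] at hdet0
      have hsubm : ∀ j : Fin (K + 1),
          Q.submatrix Fin.succ j.succAbove = (blockOf k P).submatrix id j.succAbove := by
        intro j
        ext a c
        rw [Matrix.submatrix_apply, hQs, Matrix.submatrix_apply, id_eq]
      -- restrict the sum to the block
      have hemb2inj : Function.Injective (emb2 k) := by
        intro a b h
        have h2 := congrArg Fin.val h
        ext
        simpa [emb2] using h2
      have hout : ∀ t ∈ Finset.univ, t ∉ Finset.univ.map ⟨emb2 k, hemb2inj⟩ →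
          P i t * vh t = 0 := by
        intro t _ ht
        have hnt : ¬ ((t : ℕ) < K + 1) := by
          intro h
          exact ht (Finset.mem_map.mpr ⟨⟨(t : ℕ), h⟩, Finset.mem_univ _, by ext; rfl⟩)
        have : vh t = 0 := by rw [hvh]; exact dif_neg hnt
        rw [this, mul_zero]
      rw [← Finset.sum_subset (Finset.subset_univ _) hout, Finset.sum_map]
      have hterm : ∀ j : Fin (K + 1),
          P i ((⟨emb2 k, hemb2inj⟩ : Fin (K+1) ↪ Fin n) j) * vh ((⟨emb2 k, hemb2inj⟩ : Fin (K+1) ↪ Fin n) j)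
            = (-1) ^ (j : ℕ) * Q 0 j * (Q.submatrix Fin.succ j.succAbove).det := by
        intro j
        have hCpow : (C ((-1 : ℂ) ^ (j : ℕ)) : ℂ[X]) = (-1) ^ (j : ℕ) := by
          rw [_root_.map_pow, _root_.map_neg, _root_.map_one]
        show P i (emb2 k j) * vh (emb2 k j) = _
        have hmj : ((blockOf k P).submatrix id j.succAbove).det = m j := rfl
        rw [hvhval j, hQ0, hsubm j, hmh]
        dsimp only
        rw [hCpow, hmj]
        ring
      exact (Finset.sum_congr rfl (fun j _ => hterm j)).trans hdet0
    · apply Finset.sum_eq_zero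
      intro t _
      by_cases ht : (t : ℕ) < K + 1
      · have hPit : P i t = 0 := by
          rcases Nat.lt_or_ge (t : ℕ) (i : ℕ) with h | h
          · have htlt : t < i := h
            rw [hPentry, hA i t htlt, hB i t htlt]
            simp
          · have hik2 : (i : ℕ) = K ∧ (t : ℕ) = K := by omega
            have hi : i = k := Fin.ext hik2.1
            have ht2 : t = k := Fin.ext hik2.2
            rw [hPentry, hi, ht2, hA0, hB0]
            simp
        rw [hPit, zero_mul]
      · have : vh t = 0 := by rw [hvh]; exact dif_neg ht
        rw [this, mul_zero]
  -- moving to the rational function field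
  have hmapmat : pencilRat A B = P.map (algebraMap ℂ[X] (RatFunc ℂ)) := by
    ext i j
    show algebraMap ℂ (RatFunc ℂ) (A i j) + RatFunc.X * algebraMap ℂ (RatFunc ℂ) (B i j)
        = algebraMap ℂ[X] (RatFunc ℂ) (C (A i j) + X * C (B i j))
    have hCmap : ∀ a : ℂ, algebraMap ℂ[X] (RatFunc ℂ) (C a) = algebraMap ℂ (RatFunc ℂ) a := by
      intro a
      rw [← Polynomial.algebraMap_eq, ← IsScalarTower.algebraMap_apply]
    rw [map_add, _root_.map_mul, RatFunc.algebraMap_X, hCmap, hCmap]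
  have hmulVecMap : ∀ (M : Matrix (Fin n) (Fin n) ℂ[X]) (v : Fin n → ℂ[X]),
      (M.map (algebraMap ℂ[X] (RatFunc ℂ))).mulVec (fun i => algebraMap ℂ[X] (RatFunc ℂ) (v i))
      = fun i => algebraMap ℂ[X] (RatFunc ℂ) (M.mulVec v i) := by
    intro M v
    funext i
    show (∑ t, algebraMap ℂ[X] (RatFunc ℂ) (M i t) * algebraMap ℂ[X] (RatFunc ℂ) (v t))
      = algebraMap ℂ[X] (RatFunc ℂ) (∑ t, M i t * v t)
    rw [map_sum]
    exact Finset.sum_congr rfl fun t _ => (map_mul _ _ _).symm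
  have hratker : (pencilRat A B).mulVec (fun i => algebraMap ℂ[X] (RatFunc ℂ) (vh i)) = 0 := by
    rw [hmapmat, hmulVecMap]
    funext i
    rw [hker]
    simp
  constructor
  · -- membership : vh witnesses K ∈ kernelDegrees
    refine ⟨vh, ?_, hratker, ?_⟩
    · intro h
      have h1 := congrFun h (emb2 k jstar)
      rw [hvhval jstar, Pi.zero_apply] at h1
      exact hmhjsne h1
    · apply le_antisymm
      · refine le_trans ?_ (Finset.le_sup (Finset.mem_univ (emb2 k jstar)))
        rw [hvhval jstar]
        exact hKleh
      · apply Finset.sup_le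
        intro t _
        by_cases ht : (t : ℕ) < K + 1
        · have : vh t = mh ⟨(t : ℕ), ht⟩ := by rw [hvh]; exact dif_pos ht
          rw [this]
          exact hmhdeg _
        · have : vh t = 0 := by rw [hvh]; exact dif_neg ht
          rw [this]
          simp
  · -- lower bound
    rintro d ⟨v, hv0, hvker, hdeq⟩
    set xh : Fin n → RatFunc ℂ := fun t => algebraMap ℂ[X] (RatFunc ℂ) (vh t) with hxh
    set x : Fin n → RatFunc ℂ := fun t => algebraMap ℂ[X] (RatFunc ℂ) (v t) with hx
    have halginj : Function.Injective (algebraMap ℂ[X] (RatFunc ℂ)) :=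
      RatFunc.algebraMap_injective ℂ
    have hxker : x ∈ LinearMap.ker (pencilRat A B).mulVecLin := by
      rw [LinearMap.mem_ker, Matrix.mulVecLin_apply]
      exact hvker
    have hxhker : xh ∈ LinearMap.ker (pencilRat A B).mulVecLin := by
      rw [LinearMap.mem_ker, Matrix.mulVecLin_apply]
      exact hratker
    have hxhne : xh ≠ 0 := by
      intro h
      have h1 := congrFun h (emb2 k jstar)
      rw [hxh] at h1
      dsimp only at h1
      rw [hvhval jstar, Pi.zero_apply] at h1
      exact hmhjsne (halginj (by rw [map_zero]; exact h1))
    have hfr : Module.finrank (RatFunc ℂ) (LinearMap.ker (pencilRat A B).mulVecLin) = 1 := by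
      have h1 := LinearMap.finrank_range_add_finrank_ker (pencilRat A B).mulVecLin
      rw [Module.finrank_fintype_fun_eq_card, Fintype.card_fin] at h1
      have h2 : Module.finrank (RatFunc ℂ)
          (LinearMap.range (pencilRat A B).mulVecLin) = n - 1 := hrank
      have h3 := k.pos
      omega
    have hspan : Submodule.span (RatFunc ℂ) {xh} = LinearMap.ker (pencilRat A B).mulVecLin := by
      apply Submodule.eq_of_le_of_finrank_le
      · rw [Submodule.span_le, Set.singleton_subset_iff]
        exact hxhker
      · rw [hfr, finrank_span_singleton hxhne]
    have hxmem : x ∈ Submodule.span (RatFunc ℂ) {xh} := by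
      rw [hspan]
      exact hxker
    obtain ⟨f, hf⟩ := Submodule.mem_span_singleton.mp hxmem
    have hfx : ∀ t, x t = f * xh t := by
      intro t
      rw [← hf]
      rfl
    have hvout : ∀ t : Fin n, ¬((t : ℕ) < K + 1) → v t = 0 := by
      intro t ht
      have h2 : vh t = 0 := by rw [hvh]; exact dif_neg ht
      apply halginj
      rw [map_zero]
      have := hfx t
      rw [hxh] at this
      dsimp only at this
      rw [h2, map_zero, mul_zero] at this
      exact this
    have hq0 : f.denom ≠ 0 := f.denom_ne_zero
    have hqne : (algebraMap ℂ[X] (RatFunc ℂ)) f.denom ≠ 0 :=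
      RatFunc.algebraMap_ne_zero hq0
    have hfq : f * algebraMap ℂ[X] (RatFunc ℂ) f.denom = algebraMap ℂ[X] (RatFunc ℂ) f.num := by
      calc f * algebraMap ℂ[X] (RatFunc ℂ) f.denom
          = (algebraMap ℂ[X] (RatFunc ℂ) f.num / algebraMap ℂ[X] (RatFunc ℂ) f.denom) *
            algebraMap ℂ[X] (RatFunc ℂ) f.denom := by rw [RatFunc.num_div_denom]
        _ = algebraMap ℂ[X] (RatFunc ℂ) f.num := div_mul_cancel₀ _ hqne
    have hrel : ∀ j : Fin (K + 1), f.denom * v (emb2 k j) = f.num * mh j := by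
      intro j
      apply halginj
      rw [_root_.map_mul, _root_.map_mul]
      have h1 := hfx (emb2 k j)
      rw [hx, hxh] at h1
      dsimp only at h1
      rw [hvhval j] at h1
      calc algebraMap ℂ[X] (RatFunc ℂ) f.denom * algebraMap ℂ[X] (RatFunc ℂ) (v (emb2 k j))
          = algebraMap ℂ[X] (RatFunc ℂ) f.denom * (f * algebraMap ℂ[X] (RatFunc ℂ) (mh j)) := by
            rw [← h1]
        _ = (f * algebraMap ℂ[X] (RatFunc ℂ) f.denom) * algebraMap ℂ[X] (RatFunc ℂ) (mh j) := by
            ring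
        _ = algebraMap ℂ[X] (RatFunc ℂ) f.num * algebraMap ℂ[X] (RatFunc ℂ) (mh j) := by
            rw [hfq]
    obtain ⟨p', hp'⟩ := descent (fun j => v (emb2 k j)) mh hrooth f.denom.natDegree
      f.denom f.num hq0 le_rfl hrel
    have hp'ne : p' ≠ 0 := by
      rintro rfl
      apply hv0
      funext t
      rw [Pi.zero_apply]
      by_cases ht : (t : ℕ) < K + 1
      · have h1 := hp' ⟨(t : ℕ), ht⟩
        rw [zero_mul] at h1
        have he : emb2 k ⟨(t : ℕ), ht⟩ = t := by ext; rfl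
        rw [he] at h1
        exact h1
      · exact hvout t ht
    have hdk : K ≤ (v (emb2 k jstar)).natDegree := by
      rw [hp' jstar, Polynomial.natDegree_mul hp'ne hmhjsne]
      omega
    rw [hdeq]
    exact hdk.trans (Finset.le_sup (f := fun i => (v i).natDegree) (Finset.mem_univ (emb2 k jstar)))
end

section
/- Let A + λB ∈ ℂ[λ]₁^{n×n}, fix k with 0 ≤ k ≤ n−1, and define f_{k+1}(Q,Z) = Σ_{i>j}(|(QAZ)_{ij}|² + |(QBZ)_{ij}|²) + |(QAZ)_{k+1,k+1}|² + |(QBZ)_{k+1,k+1}|² for (Q,Z) ∈ U(n)×U(n). Then the minimum of the Frobenius distance from A + λB to the set Schur_n^{k+1} (pencils admitting a generalized Schur form with zero (k+1,k+1) entry) equals the minimum of √(f_{k+1}(Q,Z)) over U(n)×U(n); moreover (Q₀,Z₀) is a global minimizer of f_{k+1} if and only if Q₀* P_{k+1}(Q₀AZ₀) Z₀* + λ Q₀* P_{k+1}(Q₀BZ₀) Z₀* is a nearest pencil in Schur_n^{k+1} to A + λB. -/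
open Matrix

variable {n : ℕ}

noncomputable def pencilNormSq (A B : Matrix (Fin n) (Fin n) ℂ) : ℝ :=
  (∑ i, ∑ j, ‖A i j‖ ^ 2) + ∑ i, ∑ j, ‖B i j‖ ^ 2

/-- Frobenius distance between the pencils `A + λB` and `S + λT`. -/
noncomputable def pencilDist (A B S T : Matrix (Fin n) (Fin n) ℂ) : ℝ :=
  Real.sqrt (pencilNormSq (A - S) (B - T))

def Pk (k : Fin n) (A : Matrix (Fin n) (Fin n) ℂ) : Matrix (Fin n) (Fin n) ℂ :=
  Matrix.of fun i j => if i < j ∨ (i = j ∧ i ≠ k) then A i j else 0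

/-- The set of pencils admitting a generalized Schur form with zero `(k,k)` entry. -/
def SchurSet (n : ℕ) (k : Fin n) :
    Set (Matrix (Fin n) (Fin n) ℂ × Matrix (Fin n) (Fin n) ℂ) :=
  {p | ∃ Q Z : Matrix (Fin n) (Fin n) ℂ,
    Q ∈ Matrix.unitaryGroup (Fin n) ℂ ∧ Z ∈ Matrix.unitaryGroup (Fin n) ℂ ∧
    UpperTri (Q * p.1 * Z) ∧ UpperTri (Q * p.2 * Z) ∧
    (Q * p.1 * Z) k k = 0 ∧ (Q * p.2 * Z) k k = 0}

/-- The smooth objective `f_{k+1}(Q,Z)`. -/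
noncomputable def objFunK (k : Fin n) (A B Q Z : Matrix (Fin n) (Fin n) ℂ) : ℝ :=
  (∑ i, ∑ j, if j < i then ‖(Q * A * Z) i j‖ ^ 2 + ‖(Q * B * Z) i j‖ ^ 2 else 0) +
    (‖(Q * A * Z) k k‖ ^ 2 + ‖(Q * B * Z) k k‖ ^ 2)

noncomputable def fro (M : Matrix (Fin n) (Fin n) ℂ) : ℝ := ∑ i, ∑ j, ‖M i j‖ ^ 2

lemma fro_eq_re_trace (M : Matrix (Fin n) (Fin n) ℂ) :
    fro M = (Matrix.trace (M * Mᴴ)).re := by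
  simp only [fro, Matrix.trace, Matrix.diag, Matrix.mul_apply, Matrix.conjTranspose_apply,
    Complex.re_sum]
  refine Finset.sum_congr rfl fun i _ => ?_
  refine Finset.sum_congr rfl fun j _ => ?_
  rw [show star (M i j) = (starRingEnd ℂ) (M i j) from rfl, Complex.mul_conj]
  simp [Complex.normSq_eq_norm_sq, ← Complex.ofReal_pow]

lemma fro_unitary {Q Z : Matrix (Fin n) (Fin n) ℂ}
    (hQ : Q ∈ Matrix.unitaryGroup (Fin n) ℂ) (hZ : Z ∈ Matrix.unitaryGroup (Fin n) ℂ)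
    (M : Matrix (Fin n) (Fin n) ℂ) : fro (Q * M * Z) = fro M := by
  have hQ' : Qᴴ * Q = 1 := by
    simpa [Matrix.star_eq_conjTranspose] using (Matrix.mem_unitaryGroup_iff'.mp hQ)
  have hZ' : Z * Zᴴ = 1 := by
    simpa [Matrix.star_eq_conjTranspose] using (Matrix.mem_unitaryGroup_iff.mp hZ)
  rw [fro_eq_re_trace, fro_eq_re_trace]
  congr 1
  have : (Q * M * Z) * (Q * M * Z)ᴴ = Q * (M * Mᴴ) * Qᴴ := by
    simp only [Matrix.conjTranspose_mul]
    calc Q * M * Z * (Zᴴ * (Mᴴ * Qᴴ)) = Q * M * (Z * Zᴴ) * Mᴴ * Qᴴ := by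
          noncomm_ring
      _ = Q * (M * Mᴴ) * Qᴴ := by rw [hZ']; noncomm_ring
  rw [this, Matrix.trace_mul_comm (Q * (M * Mᴴ)) Qᴴ, ← Matrix.mul_assoc, hQ', Matrix.one_mul]

/-- the key double-sum identity -/
lemma sum_ite_or (k : Fin n) (g : Fin n → Fin n → ℝ) :
    (∑ i, ∑ j, if j < i ∨ (i = k ∧ j = k) then g i j else 0) =
      (∑ i, ∑ j, if j < i then g i j else 0) + g k k := by
  have h : ∀ i j : Fin n, (if j < i ∨ (i = k ∧ j = k) then g i j else 0) =
      (if j < i then g i j else 0) + (if i = k then (if j = k then g i j else 0) else 0) := by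
    intro i j
    rcases lt_trichotomy j i with h1 | h1 | h1
    · have : ¬(i = k ∧ j = k) := by rintro ⟨rfl, rfl⟩; exact lt_irrefl _ h1
      by_cases hik : i = k
      · have hjk : j ≠ k := fun hjk => this ⟨hik, hjk⟩
        simp [h1, hik, hjk]
      · simp [h1, hik]
    · subst h1
      by_cases hik : j = k <;> simp [hik, lt_irrefl]
    · have hji : ¬ j < i := not_lt.mpr h1.le
      have : ¬(i = k ∧ j = k) := by rintro ⟨rfl, rfl⟩; exact lt_irrefl _ h1
      by_cases hik : i = k
      · have hjk : j ≠ k := fun hjk => this ⟨hik, hjk⟩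
        simp [hji, hik, hjk]
      · simp [hji, hik, this]
  simp only [h, Finset.sum_add_distrib]
  congr 1
  have h2 : ∀ i : Fin n, (∑ j, if i = k then (if j = k then g i j else 0) else 0) =
      if i = k then g i k else 0 := by
    intro i; by_cases hik : i = k <;> simp [hik]
  simp only [h2]
  simp

lemma part_le_fro {k : Fin n} {U : Matrix (Fin n) (Fin n) ℂ} (hU : UpperTri U)
    (hUk : U k k = 0) (M : Matrix (Fin n) (Fin n) ℂ) :
    (∑ i, ∑ j, if j < i then ‖M i j‖ ^ 2 else 0) + ‖M k k‖ ^ 2 ≤ fro (M - U) := by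
  rw [← sum_ite_or k (fun i j => ‖M i j‖ ^ 2)]
  have key : (∑ i, ∑ j, if j < i ∨ (i = k ∧ j = k) then ‖M i j‖ ^ 2 else 0) =
      ∑ i, ∑ j, if j < i ∨ (i = k ∧ j = k) then ‖(M - U) i j‖ ^ 2 else 0 := by
    refine Finset.sum_congr rfl fun i _ => Finset.sum_congr rfl fun j _ => ?_
    by_cases h : j < i ∨ (i = k ∧ j = k)
    · rw [if_pos h, if_pos h]
      have : U i j = 0 := by
        rcases h with h | ⟨rfl, rfl⟩
        · exact hU i j h
        · exact hUk
      simp [Matrix.sub_apply, this]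
    · rw [if_neg h, if_neg h]
  rw [key]
  refine Finset.sum_le_sum fun i _ => Finset.sum_le_sum fun j _ => ?_
  split_ifs with h
  · exact le_refl _
  · positivity

lemma pencilNormSq_eq_fro (A B : Matrix (Fin n) (Fin n) ℂ) :
    pencilNormSq A B = fro A + fro B := rfl

lemma upperTri_Pk (k : Fin n) (M : Matrix (Fin n) (Fin n) ℂ) : UpperTri (Pk k M) := by
  intro i j hji
  simp only [Pk, Matrix.of_apply]
  rw [if_neg]
  rintro (h | ⟨rfl, -⟩)
  · exact absurd (h.trans hji) (lt_irrefl _)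
  · exact absurd hji (lt_irrefl _)

lemma Pk_kk (k : Fin n) (M : Matrix (Fin n) (Fin n) ℂ) : Pk k M k k = 0 := by
  simp [Pk]

lemma fro_sub_Pk (k : Fin n) (M : Matrix (Fin n) (Fin n) ℂ) :
    fro (M - Pk k M) = (∑ i, ∑ j, if j < i then ‖M i j‖ ^ 2 else 0) + ‖M k k‖ ^ 2 := by
  rw [← sum_ite_or k (fun i j => ‖M i j‖ ^ 2)]
  refine Finset.sum_congr rfl fun i _ => Finset.sum_congr rfl fun j _ => ?_
  simp only [Matrix.sub_apply, Pk, Matrix.of_apply]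
  by_cases hc : i < j ∨ (i = j ∧ i ≠ k)
  · rw [if_pos hc, sub_self]
    have : ¬(j < i ∨ (i = k ∧ j = k)) := by
      rintro (h | ⟨rfl, rfl⟩)
      · rcases hc with h' | ⟨rfl, -⟩
        · exact absurd (h.trans h') (lt_irrefl _)
        · exact absurd h (lt_irrefl _)
      · rcases hc with h' | ⟨-, hne⟩
        · exact absurd h' (lt_irrefl _)
        · exact hne rfl
    rw [if_neg this]
    simp
  · rw [if_neg hc, sub_zero]
    have : j < i ∨ (i = k ∧ j = k) := by
      push_neg at hc
      rcases lt_trichotomy j i with h | h | h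
      · exact Or.inl h
      · have hik : i = k := hc.2 h.symm
        exact Or.inr ⟨hik, h.trans hik⟩
      · exact absurd h (not_lt.mpr hc.1)
    rw [if_pos this]

lemma objFunK_eq (k : Fin n) (A B Q Z : Matrix (Fin n) (Fin n) ℂ) :
    objFunK k A B Q Z =
      ((∑ i, ∑ j, if j < i then ‖(Q * A * Z) i j‖ ^ 2 else 0) + ‖(Q * A * Z) k k‖ ^ 2) +
      ((∑ i, ∑ j, if j < i then ‖(Q * B * Z) i j‖ ^ 2 else 0) + ‖(Q * B * Z) k k‖ ^ 2) := by
  simp only [objFunK]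
  have h : ∀ i j : Fin n,
      (if j < i then ‖(Q * A * Z) i j‖ ^ 2 + ‖(Q * B * Z) i j‖ ^ 2 else 0) =
        (if j < i then ‖(Q * A * Z) i j‖ ^ 2 else 0) +
          (if j < i then ‖(Q * B * Z) i j‖ ^ 2 else 0) := by
    intro i j; split_ifs <;> simp
  simp only [h, Finset.sum_add_distrib]
  ring

lemma unitary_cancel {Q Z : Matrix (Fin n) (Fin n) ℂ}
    (hQ : Q ∈ Matrix.unitaryGroup (Fin n) ℂ) (hZ : Z ∈ Matrix.unitaryGroup (Fin n) ℂ)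
    (P : Matrix (Fin n) (Fin n) ℂ) : Q * (Qᴴ * P * Zᴴ) * Z = P := by
  have hQ1 : Q * Qᴴ = 1 := by
    simpa [Matrix.star_eq_conjTranspose] using (Matrix.mem_unitaryGroup_iff.mp hQ)
  have hZ1 : Zᴴ * Z = 1 := by
    simpa [Matrix.star_eq_conjTranspose] using (Matrix.mem_unitaryGroup_iff'.mp hZ)
  calc Q * (Qᴴ * P * Zᴴ) * Z = (Q * Qᴴ) * P * (Zᴴ * Z) := by noncomm_ring
    _ = P := by rw [hQ1, hZ1, Matrix.one_mul, Matrix.mul_one]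

lemma proj_mem_SchurSet {Q Z : Matrix (Fin n) (Fin n) ℂ} (k : Fin n)
    (hQ : Q ∈ Matrix.unitaryGroup (Fin n) ℂ) (hZ : Z ∈ Matrix.unitaryGroup (Fin n) ℂ)
    (A B : Matrix (Fin n) (Fin n) ℂ) :
    (Qᴴ * Pk k (Q * A * Z) * Zᴴ, Qᴴ * Pk k (Q * B * Z) * Zᴴ) ∈ SchurSet n k := by
  refine ⟨Q, Z, hQ, hZ, ?_, ?_, ?_, ?_⟩ <;>
    simp only [unitary_cancel hQ hZ]
  · exact upperTri_Pk k _
  · exact upperTri_Pk k _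
  · exact Pk_kk k _
  · exact Pk_kk k _

lemma proj_dist_eq {Q Z : Matrix (Fin n) (Fin n) ℂ} (k : Fin n)
    (hQ : Q ∈ Matrix.unitaryGroup (Fin n) ℂ) (hZ : Z ∈ Matrix.unitaryGroup (Fin n) ℂ)
    (A B : Matrix (Fin n) (Fin n) ℂ) :
    pencilNormSq (A - Qᴴ * Pk k (Q * A * Z) * Zᴴ) (B - Qᴴ * Pk k (Q * B * Z) * Zᴴ) =
      objFunK k A B Q Z := by
  rw [pencilNormSq_eq_fro, objFunK_eq]
  have hA : A - Qᴴ * Pk k (Q * A * Z) * Zᴴ =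
      A - Qᴴ * Pk k (Q * A * Z) * Zᴴ := rfl
  have key : ∀ M : Matrix (Fin n) (Fin n) ℂ,
      fro (M - Qᴴ * Pk k (Q * M * Z) * Zᴴ) =
        (∑ i, ∑ j, if j < i then ‖(Q * M * Z) i j‖ ^ 2 else 0) + ‖(Q * M * Z) k k‖ ^ 2 := by
    intro M
    rw [← fro_unitary hQ hZ, Matrix.mul_sub, Matrix.sub_mul, unitary_cancel hQ hZ,
      fro_sub_Pk]
  rw [key A, key B]

lemma schur_lower_bound {Q Z : Matrix (Fin n) (Fin n) ℂ} (k : Fin n)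
    (hQ : Q ∈ Matrix.unitaryGroup (Fin n) ℂ) (hZ : Z ∈ Matrix.unitaryGroup (Fin n) ℂ)
    {S T A B : Matrix (Fin n) (Fin n) ℂ}
    (hT1 : UpperTri (Q * S * Z)) (hT2 : UpperTri (Q * T * Z))
    (hk1 : (Q * S * Z) k k = 0) (hk2 : (Q * T * Z) k k = 0) :
    objFunK k A B Q Z ≤ pencilNormSq (A - S) (B - T) := by
  rw [objFunK_eq, pencilNormSq_eq_fro,
    show A - S = A - S from rfl]
  have hA : fro (A - S) = fro (Q * A * Z - Q * S * Z) := by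
    rw [← fro_unitary hQ hZ, Matrix.mul_sub, Matrix.sub_mul]
  have hB : fro (B - T) = fro (Q * B * Z - Q * T * Z) := by
    rw [← fro_unitary hQ hZ, Matrix.mul_sub, Matrix.sub_mul]
  rw [hA, hB]
  exact add_le_add (part_le_fro hT1 hk1 _) (part_le_fro hT2 hk2 _)

lemma objFunK_nonneg (k : Fin n) (A B Q Z : Matrix (Fin n) (Fin n) ℂ) :
    0 ≤ objFunK k A B Q Z := by
  refine add_nonneg (Finset.sum_nonneg fun i _ => Finset.sum_nonneg fun j _ => ?_)
    (add_nonneg (by positivity) (by positivity))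
  split_ifs
  · positivity
  · exact le_refl 0

/-- The distance from `A + λB` to `Schur_n^{k+1}` equals the minimum of
`√(f_{k+1}(Q,Z))` over `U(n) × U(n)`, and `(Q₀,Z₀)` is a global minimizer of `f_{k+1}`
iff the associated projected pencil is a nearest point of `Schur_n^{k+1}`. -/
theorem nearest_pencil_with_prescribed_minimal_index (A B : Matrix (Fin n) (Fin n) ℂ)
    (k : ℕ) (hk : k < n) :
    (sInf {d : ℝ | ∃ p ∈ SchurSet n ⟨k, hk⟩, d = pencilDist A B p.1 p.2} =
      sInf {d : ℝ | ∃ Q Z : Matrix (Fin n) (Fin n) ℂ,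
        Q ∈ Matrix.unitaryGroup (Fin n) ℂ ∧ Z ∈ Matrix.unitaryGroup (Fin n) ℂ ∧
        d = Real.sqrt (objFunK ⟨k, hk⟩ A B Q Z)}) ∧
    ∀ Q₀ Z₀ : Matrix (Fin n) (Fin n) ℂ,
      Q₀ ∈ Matrix.unitaryGroup (Fin n) ℂ → Z₀ ∈ Matrix.unitaryGroup (Fin n) ℂ →
      ((∀ Q Z : Matrix (Fin n) (Fin n) ℂ,
          Q ∈ Matrix.unitaryGroup (Fin n) ℂ → Z ∈ Matrix.unitaryGroup (Fin n) ℂ →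
          objFunK ⟨k, hk⟩ A B Q₀ Z₀ ≤ objFunK ⟨k, hk⟩ A B Q Z) ↔
        ((Q₀ᴴ * Pk ⟨k, hk⟩ (Q₀ * A * Z₀) * Z₀ᴴ, Q₀ᴴ * Pk ⟨k, hk⟩ (Q₀ * B * Z₀) * Z₀ᴴ)
            ∈ SchurSet n ⟨k, hk⟩ ∧
          ∀ p ∈ SchurSet n ⟨k, hk⟩,
            pencilDist A B (Q₀ᴴ * Pk ⟨k, hk⟩ (Q₀ * A * Z₀) * Z₀ᴴ)
                (Q₀ᴴ * Pk ⟨k, hk⟩ (Q₀ * B * Z₀) * Z₀ᴴ) ≤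
              pencilDist A B p.1 p.2)) := by
  
  set kk : Fin n := ⟨k, hk⟩
  have hdist_proj : ∀ Q Z : Matrix (Fin n) (Fin n) ℂ,
      Q ∈ Matrix.unitaryGroup (Fin n) ℂ → Z ∈ Matrix.unitaryGroup (Fin n) ℂ →
      pencilDist A B (Qᴴ * Pk kk (Q * A * Z) * Zᴴ) (Qᴴ * Pk kk (Q * B * Z) * Zᴴ) =
        Real.sqrt (objFunK kk A B Q Z) := by
    intro Q Z hQ hZ
    rw [pencilDist, proj_dist_eq kk hQ hZ A B]
  have hone : (1 : Matrix (Fin n) (Fin n) ℂ) ∈ Matrix.unitaryGroup (Fin n) ℂ := by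
    rw [Matrix.mem_unitaryGroup_iff]; simp
  set D := {d : ℝ | ∃ p ∈ SchurSet n kk, d = pencilDist A B p.1 p.2} with hD
  set E := {d : ℝ | ∃ Q Z : Matrix (Fin n) (Fin n) ℂ,
      Q ∈ Matrix.unitaryGroup (Fin n) ℂ ∧ Z ∈ Matrix.unitaryGroup (Fin n) ℂ ∧
      d = Real.sqrt (objFunK kk A B Q Z)} with hE
  have hsub : E ⊆ D := by
    rintro d ⟨Q, Z, hQ, hZ, rfl⟩
    exact ⟨_, proj_mem_SchurSet kk hQ hZ A B, (hdist_proj Q Z hQ hZ).symm⟩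
  have hEne : E.Nonempty := ⟨_, 1, 1, hone, hone, rfl⟩
  have hDne : D.Nonempty := hEne.mono hsub
  have hDbdd : BddBelow D := by
    refine ⟨0, fun d hd => ?_⟩
    obtain ⟨p, -, rfl⟩ := hd
    exact Real.sqrt_nonneg _
  have hEbdd : BddBelow E := by
    refine ⟨0, fun d hd => ?_⟩
    obtain ⟨Q, Z, -, -, rfl⟩ := hd
    exact Real.sqrt_nonneg _
  have hlow : ∀ d ∈ D, ∃ e ∈ E, e ≤ d := by
    rintro d ⟨p, ⟨Q, Z, hQ, hZ, h1, h2, h3, h4⟩, rfl⟩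
    refine ⟨Real.sqrt (objFunK kk A B Q Z), ⟨Q, Z, hQ, hZ, rfl⟩, ?_⟩
    exact Real.sqrt_le_sqrt (schur_lower_bound kk hQ hZ h1 h2 h3 h4)
  constructor
  · refine le_antisymm (csInf_le_csInf hDbdd hEne hsub) ?_
    refine le_csInf hDne fun d hd => ?_
    obtain ⟨e, he, hed⟩ := hlow d hd
    exact (csInf_le hEbdd he).trans hed
  · intro Q₀ Z₀ hQ₀ hZ₀
    constructor
    · intro hmin
      refine ⟨proj_mem_SchurSet kk hQ₀ hZ₀ A B, ?_⟩
      rintro p ⟨Q, Z, hQ, hZ, h1, h2, h3, h4⟩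
      rw [hdist_proj Q₀ Z₀ hQ₀ hZ₀]
      refine le_trans (Real.sqrt_le_sqrt (hmin Q Z hQ hZ)) ?_
      exact Real.sqrt_le_sqrt (schur_lower_bound kk hQ hZ h1 h2 h3 h4)
    · rintro ⟨-, hnear⟩ Q Z hQ hZ
      have h2 := hnear _ (proj_mem_SchurSet kk hQ hZ A B)
      rw [hdist_proj Q₀ Z₀ hQ₀ hZ₀, hdist_proj Q Z hQ hZ] at h2
      have e0 := Real.sq_sqrt (objFunK_nonneg kk A B Q₀ Z₀)
      have e1 := Real.sq_sqrt (objFunK_nonneg kk A B Q Z)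
      nlinarith [Real.sqrt_nonneg (objFunK kk A B Q Z),
        Real.sqrt_nonneg (objFunK kk A B Q₀ Z₀)]
end
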